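/- arXiv:0812.3933 — 3 statements merged into one kernel-verified Lean document; each statement's English description precedes it below -/
import Mathlib

section
/- Let π = [π_0, π_1, …, π_{n+1}] be a permutation with π_1 = 1 and let 2 ≤ i < j ≤ n+1 be indices such that |π_{i−1} − π_{j−1}| = 1, |π_i − π_{i−1}| ≠ 1, and |π_j − π_{j−1}| ≠ 1. Then the prefix transreversal βτ(1,i,j) removes at least one breakpoint, i.e., b(π·βτ(1,i,j)) ≤ b(π) − 1. -/
/-- A permutation on `n` elements: a list `[π₀, π₁, …, π_{n+1}]` of distinct
naturals that is a rearrangement of `0, 1, …, n+1` with `π₀ = 0` and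
`π_{n+1} = n+1`. -/
def IsPerm (n : ℕ) (π : List ℕ) : Prop :=
  π.Perm (List.range (n + 2)) ∧ π.getD 0 0 = 0 ∧ π.getD (n + 1) 0 = n + 1

/-- Breakpoint count `b(π)`: `1` plus the number of indices `i` with
`2 ≤ i ≤ n+1` and `|π_i − π_{i−1}| ≠ 1` (these are exactly the consecutive
pairs of the tail `π₁, …, π_{n+1}`). -/
def bp (π : List ℕ) : ℕ :=
  1 + ((π.drop 1).zip (π.drop 2)).countP
        (fun p => !(p.1 + 1 == p.2 || p.2 + 1 == p.1))

/-- Redefined breakpoint count `b′(π)`: the number of indices `i` with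
`1 ≤ i ≤ n+1` and `|π_i − π_{i−1}| ≠ 1`. -/
def bp' (π : List ℕ) : ℕ :=
  (π.zip (π.drop 1)).countP
    (fun p => !(p.1 + 1 == p.2 || p.2 + 1 == p.1))

/-- Prefix reversal `β(1,j)`: `[π₀, π_{j−1}, …, π₁, π_j, …, π_{n+1}]`. -/
def prefixReversal (π : List ℕ) (j : ℕ) : List ℕ :=
  π.take 1 ++ ((π.drop 1).take (j - 1)).reverse ++ π.drop j

/-- Prefix transposition `τ(1,j,k)`:
`[π₀, π_j, …, π_{k−1}, π₁, …, π_{j−1}, π_k, …, π_{n+1}]`. -/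
def prefixTransposition (π : List ℕ) (j k : ℕ) : List ℕ :=
  π.take 1 ++ (π.drop j).take (k - j) ++ (π.drop 1).take (j - 1) ++ π.drop k

/-- Prefix transreversal `βτ(1,j,k)`:
`[π₀, π_j, …, π_{k−1}, π_{j−1}, …, π₁, π_k, …, π_{n+1}]`. -/
def prefixTransreversal (π : List ℕ) (j k : ℕ) : List ℕ :=
  π.take 1 ++ (π.drop j).take (k - j) ++ ((π.drop 1).take (j - 1)).reverse ++ π.drop k

/-- A prefix operation: a prefix reversal, a prefix transposition, or a
prefix transreversal. -/
inductive PrefOp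
  | rev (j : ℕ)
  | trans (j k : ℕ)
  | transrev (j k : ℕ)

/-- Apply a prefix operation to a permutation. -/
def PrefOp.apply (π : List ℕ) : PrefOp → List ℕ
  | .rev j => prefixReversal π j
  | .trans j k => prefixTransposition π j k
  | .transrev j k => prefixTransreversal π j k

/-- Validity of a prefix operation on a permutation of `n` elements:
`3 ≤ j ≤ n+1` for a prefix reversal, `2 ≤ j < k ≤ n+1` for a prefix
transposition or a prefix transreversal. -/
def PrefOp.Valid (n : ℕ) : PrefOp → Prop
  | .rev j => 3 ≤ j ∧ j ≤ n + 1
  | .trans j k => 2 ≤ j ∧ j < k ∧ k ≤ n + 1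
  | .transrev j k => 2 ≤ j ∧ j < k ∧ k ≤ n + 1

/-- Is the operation a prefix reversal? -/
def PrefOp.isRev : PrefOp → Bool
  | .rev _ => true
  | _ => false

/-- Is the operation a prefix transreversal? -/
def PrefOp.isTransrev : PrefOp → Bool
  | .transrev _ _ => true
  | _ => false

/-- Apply a sequence of prefix operations, left to right. -/
def applySeq : List ℕ → List PrefOp → List ℕ
  | π, [] => π
  | π, o :: os => applySeq (o.apply π) os

/-- All operations in the sequence are valid for permutations of `n` elements. -/
def ValidSeq (n : ℕ) (ops : List PrefOp) : Prop :=
  ∀ o ∈ ops, o.Valid n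

/-- `fm π` is `m(π) + 1`, where `m(π)` is the largest index `m` such that
`π_i = i` for all `0 ≤ i ≤ m`; i.e. the length of the longest already-sorted
prefix of `π`. -/
def fm (π : List ℕ) : ℕ :=
  ((List.range π.length).takeWhile (fun i => π.getD i 0 == i)).length

/-- Forward-march prefix reversal: reverses the segment
`π_{m(π)+1}, …, π_{j−1}` in place. -/
def fmPrefixReversal (π : List ℕ) (j : ℕ) : List ℕ :=
  π.take (fm π) ++ ((π.drop (fm π)).take (j - fm π)).reverse ++ π.drop j

/-- Forward-march prefix transposition: cuts the segment
`π_{m(π)+1}, …, π_{j−1}` and pastes it between `π_{k−1}` and `π_k`. -/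
def fmPrefixTransposition (π : List ℕ) (j k : ℕ) : List ℕ :=
  π.take (fm π) ++ (π.drop j).take (k - j) ++
    (π.drop (fm π)).take (j - fm π) ++ π.drop k

/-- A forward-march operation: an FM prefix reversal or an FM prefix
transposition. -/
inductive FMOp
  | rev (j : ℕ)
  | trans (j k : ℕ)

/-- Apply a forward-march operation. -/
def FMOp.apply (π : List ℕ) : FMOp → List ℕ
  | .rev j => fmPrefixReversal π j
  | .trans j k => fmPrefixTransposition π j k

/-- Validity of a forward-march operation on a permutation `π` of `n`
elements: `m(π)+3 ≤ j ≤ n+1` for an FM prefix reversal, and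
`m(π)+2 ≤ j ≤ n`, `j < k ≤ n+1` for an FM prefix transposition
(recall `fm π = m(π) + 1`). -/
def FMOp.Valid (n : ℕ) (π : List ℕ) : FMOp → Prop
  | .rev j => fm π + 2 ≤ j ∧ j ≤ n + 1
  | .trans j k => fm π + 1 ≤ j ∧ j ≤ n ∧ j < k ∧ k ≤ n + 1

/-- Is the forward-march operation an FM prefix reversal? -/
def FMOp.isRev : FMOp → Bool
  | .rev _ => true
  | _ => false

/-- Apply a sequence of forward-march operations, left to right. -/
def applyFMSeq : List ℕ → List FMOp → List ℕ
  | π, [] => π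
  | π, o :: os => applyFMSeq (o.apply π) os

/-- Validity of a sequence of forward-march operations, where each operation
must be valid for the permutation obtained after applying the previous ones. -/
def FMValidSeq (n : ℕ) : List ℕ → List FMOp → Prop
  | _, [] => True
  | π, o :: os => o.Valid n π ∧ FMValidSeq n (o.apply π) os

def pB : ℕ × ℕ → Bool := fun p => !(p.1 + 1 == p.2 || p.2 + 1 == p.1)

def cnt (l : List ℕ) : ℕ := (l.zip (l.drop 1)).countP pB

def pc (a b : ℕ) : ℕ := if pB (a, b) then 1 else 0

theorem cnt_cons (a : ℕ) (r : List ℕ) (hr : r ≠ []) :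
    cnt (a :: r) = pc a (r.head hr) + cnt r := by
  obtain ⟨b, r', rfl⟩ := List.exists_cons_of_ne_nil hr
  simp [cnt, pc, List.countP_cons]
  exact Nat.add_comm _ _

theorem cnt_append (l : List ℕ) (hl : l ≠ []) (r : List ℕ) (hr : r ≠ []) :
    cnt (l ++ r) = cnt l + pc (l.getLast hl) (r.head hr) + cnt r := by
  induction l with
  | nil => exact absurd rfl hl
  | cons a t ih =>
    cases t with
    | nil =>
      rw [List.singleton_append, cnt_cons a r hr]
      simp [cnt]
    | cons b t' =>
      have hne : (b :: t') ++ r ≠ [] := by simp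
      rw [List.cons_append, cnt_cons a _ hne, ih (by simp) ]
      have hh : ((b :: t') ++ r).head hne = ((b :: t') : List ℕ).head (by simp) := by
        simp
      rw [hh, cnt_cons a (b :: t') (by simp)]
      simp [List.getLast_cons]
      omega

theorem pc_comm (a b : ℕ) : pc a b = pc b a := by
  simp [pc, pB, Bool.or_comm]

theorem cnt_reverse (l : List ℕ) : cnt l.reverse = cnt l := by
  induction l with
  | nil => rfl
  | cons a t ih =>
    cases t with
    | nil => rfl
    | cons b t' =>
      have hne : (b :: t' : List ℕ) ≠ [] := by simp
      have hrev : (b :: t' : List ℕ).reverse ≠ [] := by simp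
      rw [List.reverse_cons, cnt_append _ hrev [a] (by simp), ih,
        cnt_cons a (b :: t') hne]
      have : ((b :: t' : List ℕ).reverse).getLast hrev = (b :: t' : List ℕ).head hne := by
        simp [List.getLast_reverse]
      rw [this, pc_comm]
      simp [cnt]
      omega

theorem getElem_eq_getD (l : List ℕ) {a b : ℕ} (h : a < l.length) (hab : a = b) :
    l[a] = l.getD b 0 := by
  subst hab; exact (List.getD_eq_getElem l 0 h).symm

theorem getLast_take_drop (l : List ℕ) (m k : ℕ) (h : (l.drop m).take k ≠ [])
    (hkl : m + k ≤ l.length) :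
    ((l.drop m).take k).getLast h = l.getD (m + k - 1) 0 := by
  have hk1 : 1 ≤ k := by
    rcases Nat.eq_zero_or_pos k with hk | hk
    · simp [hk] at h
    · omega
  have hlen' : ((l.drop m).take k).length = k := by
    simp [List.length_take, List.length_drop]; omega
  rw [List.getLast_eq_getElem, List.getElem_take, List.getElem_drop]
  exact getElem_eq_getD l _ (by omega)

theorem head_take_drop (l : List ℕ) (m k : ℕ) (h : (l.drop m).take k ≠ [])
    (hm : m < l.length) :
    ((l.drop m).take k).head h = l.getD m 0 := by
  rw [List.head_eq_getElem, List.getElem_take, List.getElem_drop]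
  exact getElem_eq_getD l _ (by omega)

theorem head_drop (l : List ℕ) (m : ℕ) (h : l.drop m ≠ []) (hm : m < l.length) :
    (l.drop m).head h = l.getD m 0 := by
  rw [List.head_eq_getElem, List.getElem_drop]
  exact getElem_eq_getD l _ (by omega)

theorem pc_eq_one (a b : ℕ) (h : ¬(a + 1 = b ∨ b + 1 = a)) : pc a b = 1 := by
  push_neg at h
  simp [pc, pB, h.1, h.2]

theorem pc_eq_zero (a b : ℕ) (h : a + 1 = b ∨ b + 1 = a) : pc a b = 0 := by
  rcases h with h | h <;> simp [pc, pB, h]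

theorem pc_le_one (a b : ℕ) : pc a b ≤ 1 := by
  unfold pc; split <;> simp

theorem bp_eq_cnt (l : List ℕ) : bp l = 1 + cnt (l.drop 1) := by
  simp only [bp, cnt, List.drop_drop]
  rfl

/-- if `π₁ = 1`, `|π_{i−1} − π_{j−1}| = 1` and there are
breakpoints at positions `i` and `j` (with `2 ≤ i < j ≤ n+1`), then the prefix
transreversal `βτ(1,i,j)` removes at least one breakpoint. -/
theorem prefixTransreversal_removes_breakpoint
    (n : ℕ) (π : List ℕ) (hπ : IsPerm n π)
    (i j : ℕ) (h1 : π.getD 1 0 = 1)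
    (hi : 2 ≤ i) (hij : i < j) (hj : j ≤ n + 1)
    (hgrey : π.getD (i - 1) 0 + 1 = π.getD (j - 1) 0 ∨
             π.getD (j - 1) 0 + 1 = π.getD (i - 1) 0)
    (hbi : ¬(π.getD (i - 1) 0 + 1 = π.getD i 0 ∨ π.getD i 0 + 1 = π.getD (i - 1) 0))
    (hbj : ¬(π.getD (j - 1) 0 + 1 = π.getD j 0 ∨ π.getD j 0 + 1 = π.getD (j - 1) 0)) :
    bp (prefixTransreversal π i j) ≤ bp π - 1 := by
  have hlen : π.length = n + 2 := by simpa using hπ.1.length_eq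
  set B := (π.drop 1).take (i - 1) with hBdef
  set A := (π.drop i).take (j - i) with hAdef
  set C := π.drop j with hCdef
  have hlB : B.length = i - 1 := by
    simp [hBdef, List.length_take, List.length_drop, hlen]; omega
  have hlA : A.length = j - i := by
    simp [hAdef, List.length_take, List.length_drop, hlen]; omega
  have hlC : C.length = n + 2 - j := by simp [hCdef, hlen]
  have hB : B ≠ [] := by apply List.ne_nil_of_length_pos; omega
  have hA : A ≠ [] := by apply List.ne_nil_of_length_pos; omega
  have hC : C ≠ [] := by apply List.ne_nil_of_length_pos; omega
  -- decomposition of the old tail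
  have hAC : A ++ C = π.drop i := by
    have h2 := List.take_append_drop (j - i) (π.drop i)
    rwa [List.drop_drop, show i + (j - i) = j by omega] at h2
  have hdec : π.drop 1 = B ++ (A ++ C) := by
    have h2 := List.take_append_drop (i - 1) (π.drop 1)
    rw [List.drop_drop, show 1 + (i - 1) = i by omega] at h2
    rw [hAC]; exact h2.symm
  -- decomposition of the new tail
  have hnew : (prefixTransreversal π i j).drop 1 = A ++ (B.reverse ++ C) := by
    have hform : prefixTransreversal π i j = π.take 1 ++ (A ++ (B.reverse ++ C)) := by
      simp [prefixTransreversal, hAdef, hBdef, hCdef, List.append_assoc]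
    rw [hform, List.drop_left' (by simp [List.length_take, hlen])]
  -- head/last values
  have hBlast : B.getLast hB = π.getD (i - 1) 0 := by
    have h := getLast_take_drop π 1 (i - 1) hB (by omega)
    rwa [show 1 + (i - 1) - 1 = i - 1 by omega] at h
  have hBhead : B.head hB = 1 := by
    have h := head_take_drop π 1 (i - 1) hB (by omega)
    rwa [h1] at h
  have hAlast : A.getLast hA = π.getD (j - 1) 0 := by
    have h := getLast_take_drop π i (j - i) hA (by omega)
    rwa [show i + (j - i) - 1 = j - 1 by omega] at h
  have hAhead : A.head hA = π.getD i 0 := head_take_drop π i (j - i) hA (by omega)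
  have hChead : C.head hC = π.getD j 0 := head_drop π j hC (by omega)
  have hBrev : B.reverse ≠ [] := by simp [hB]
  have hBrevC : B.reverse ++ C ≠ [] := by simp [hB]
  -- rewrite both sides
  rw [bp_eq_cnt, bp_eq_cnt, hnew, hdec]
  rw [cnt_append B hB (A ++ C) (by simp [hA]),
      cnt_append A hA C hC,
      cnt_append A hA (B.reverse ++ C) hBrevC,
      cnt_append B.reverse hBrev C hC,
      cnt_reverse]
  have hh1 : (A ++ C).head (by simp [hA]) = A.head hA := List.head_append_of_ne_nil hA
  have hh2 : (B.reverse ++ C).head hBrevC = B.getLast hB := by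
    rw [List.head_append_of_ne_nil hBrev, List.head_reverse]
  have hh3 : B.reverse.getLast hBrev = B.head hB := List.getLast_reverse _
  rw [hh1, hh2, hh3, hBlast, hBhead, hAlast, hAhead, hChead]
  have e1 : pc (π.getD (i - 1) 0) (π.getD i 0) = 1 := pc_eq_one _ _ hbi
  have e2 : pc (π.getD (j - 1) 0) (π.getD j 0) = 1 := pc_eq_one _ _ hbj
  have e3 : pc (π.getD (j - 1) 0) (π.getD (i - 1) 0) = 0 :=
    pc_eq_zero _ _ (by tauto)
  have e4 : pc 1 (π.getD j 0) ≤ 1 := pc_le_one _ _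
  omega
end

section
/- For every permutation π, the prefix reversal / prefix transposition / prefix transreversal distance satisfies ⌊b(π)/2⌋ ≤ d_RTT(π) ≤ b(π) − 1. -/
def bpred : ℕ × ℕ → Bool := fun p => !(p.1 + 1 == p.2 || p.2 + 1 == p.1)

def Bcnt (l : List ℕ) : ℕ := (l.zip (l.drop 1)).countP bpred

def brk (u v : List ℕ) : ℕ :=
  match u.getLast?, v.head? with
  | some a, some b => if bpred (a, b) then 1 else 0
  | _, _ => 0

lemma bpred_true_iff (a b : ℕ) : bpred (a, b) = true ↔ a + 1 ≠ b ∧ b + 1 ≠ a := by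
  simp [bpred]

lemma bpred_false_iff (a b : ℕ) : bpred (a, b) = false ↔ a + 1 = b ∨ b + 1 = a := by
  simp [bpred]; tauto

lemma bpred_symm (a b : ℕ) : bpred (a, b) = bpred (b, a) := by
  simp [bpred, Bool.or_comm]

lemma Bcnt_nil : Bcnt [] = 0 := rfl
lemma Bcnt_single (a : ℕ) : Bcnt [a] = 0 := rfl

lemma Bcnt_cons_cons (a b : ℕ) (l : List ℕ) :
    Bcnt (a :: b :: l) = (if bpred (a, b) then 1 else 0) + Bcnt (b :: l) := by
  simp [Bcnt, List.countP_cons]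
  rcases bpred (a, b) <;> simp [Nat.add_comm]

lemma brk_nil_left (v : List ℕ) : brk [] v = 0 := rfl

lemma brk_le_one (u v : List ℕ) : brk u v ≤ 1 := by
  unfold brk
  rcases u.getLast? with _ | a <;> rcases v.head? with _ | b <;> simp
  split <;> simp

lemma Bcnt_append (u v : List ℕ) : Bcnt (u ++ v) = Bcnt u + brk u v + Bcnt v := by
  induction u with
  | nil => simp [Bcnt_nil, brk_nil_left]
  | cons a u ih =>
    cases u with
    | nil =>
      cases v with
      | nil => simp [Bcnt_single, Bcnt_nil, brk]
      | cons b v' =>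
        simp only [List.singleton_append, Bcnt_cons_cons, Bcnt_single, brk, List.getLast?_singleton,
          List.head?_cons]
        omega
    | cons a' u' =>
      have h0 : (a :: a' :: u') ++ v = a :: (a' :: u' ++ v) := rfl
      have h1 : a' :: u' ++ v = a' :: (u' ++ v) := rfl
      rw [h0, h1, Bcnt_cons_cons, ← h1, ih, Bcnt_cons_cons]
      have hb : brk (a :: a' :: u') v = brk (a' :: u') v := by
        unfold brk
        rw [List.getLast?_cons_cons]
      rw [hb]
      omega

lemma Bcnt_reverse (l : List ℕ) : Bcnt l.reverse = Bcnt l := by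
  induction l with
  | nil => rfl
  | cons a l ih =>
    rw [List.reverse_cons, Bcnt_append, ih, Bcnt_single]
    have : (a :: l) = [a] ++ l := rfl
    rw [this, Bcnt_append, Bcnt_single]
    have h1 : brk l.reverse [a] = brk [a] l := by
      unfold brk
      rw [List.getLast?_reverse, List.getLast?_singleton, List.head?_cons]
      rcases l.head? with _ | b
      · rfl
      · simp only [bpred_symm a b]
    omega

lemma run_char : ∀ (A : List ℕ), A ≠ [] → Bcnt A = 0 → A.Nodup →
    (∃ a k, 1 ≤ k ∧ A = List.range' a k 1) ∨
    (∃ a k, 2 ≤ k ∧ A = (List.range' a k 1).reverse) := by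
  intro A
  induction A with
  | nil => intro h; exact absurd rfl h
  | cons u A ih =>
    intro _ hB hnd
    cases A with
    | nil => exact Or.inl ⟨u, 1, le_refl _, rfl⟩
    | cons v A' =>
      rw [Bcnt_cons_cons] at hB
      have hpf : bpred (u, v) = false := by
        rcases h : bpred (u, v) with _ | _
        · rfl
        · rw [h] at hB; simp at hB
      have hB' : Bcnt (v :: A') = 0 := by
        rw [hpf] at hB; simpa using hB
      have hnd' : (v :: A').Nodup := hnd.of_cons
      have hmem : u ∉ v :: A' := (List.nodup_cons.mp hnd).1
      rcases bpred_false_iff u v |>.mp hpf with huv | hvu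
      · -- u + 1 = v
        rcases ih (by simp) hB' hnd' with ⟨a, k, hk, heq⟩ | ⟨a, k, hk, heq⟩
        · -- ascending, head = a = v
          have hav : a = v := by
            rcases k with _ | k'
            · omega
            · rw [List.range'_succ] at heq
              exact (List.cons.injEq _ _ _ _ ▸ heq).1.symm
          refine Or.inl ⟨u, k + 1, by omega, ?_⟩
          rw [List.range'_succ, heq, hav, ← huv]
        · -- descending, head of reverse = a + k - 1 = v; u = v - 1 ∈ range, contradiction
          exfalso
          have hkv : a + k - 1 = v := by
            have h2 : (v :: A').head? = some (a + k - 1) := by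
              rw [heq, List.head?_reverse]
              rcases k with _ | k'
              · omega
              · rw [List.range'_concat]
                simp
            simpa using h2.symm
          have hu : u ∈ List.range' a k 1 := by
            rw [List.mem_range'_1]; omega
          refine hmem ?_
          rw [heq, List.mem_reverse]
          exact hu
      · -- v + 1 = u
        rcases ih (by simp) hB' hnd' with ⟨a, k, hk, heq⟩ | ⟨a, k, hk, heq⟩
        · have hav : a = v := by
            rcases k with _ | k'
            · omega
            · rw [List.range'_succ] at heq
              exact (List.cons.injEq _ _ _ _ ▸ heq).1.symm
          subst hav
          rcases Nat.lt_or_ge k 2 with hk1 | hk2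
          · -- k = 1 : A = [a+1, a] descending
            have hk1' : k = 1 := by omega
            subst hk1'
            refine Or.inr ⟨a, 2, le_refl _, ?_⟩
            have : List.range' a 2 1 = [a, a + 1] := by simp [List.range'_succ]
            rw [this, ← hvu, heq]
            rfl
          · exfalso
            have hu : u ∈ List.range' a k 1 := by
              rw [List.mem_range'_1]; omega
            exact hmem (heq ▸ hu)
        · -- descending with head a+k-1 = v, u = v+1: extend
          have hkv : a + k - 1 = v := by
            have : (v :: A').head? = some (a + k - 1) := by
              rw [heq, List.head?_reverse]
              rcases k with _ | k'
              · omega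
              · rw [List.range'_concat]
                simp
            simpa using this.symm
          refine Or.inr ⟨a, k + 1, by omega, ?_⟩
          rw [List.range'_concat, List.reverse_append]
          simp only [List.reverse_singleton, List.singleton_append]
          rw [← heq]
          have : a + 1 * k = u := by omega
          rw [this]
  

lemma range'_head? (a k : ℕ) (h : 1 ≤ k) : (List.range' a k 1).head? = some a := by
  rcases k with _ | k'
  · omega
  · rw [List.range'_succ]; rfl

lemma range'_getLast? (a k : ℕ) (h : 1 ≤ k) :
    (List.range' a k 1).getLast? = some (a + k - 1) := by
  rcases k with _ | k'
  · omega
  · rw [List.range'_concat, List.getLast?_append]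
    simp

lemma Bcnt_range' : ∀ (k a : ℕ), Bcnt (List.range' a k 1) = 0 := by
  intro k
  induction k with
  | zero => intro a; rfl
  | succ k' ih =>
    intro a
    rcases k' with _ | k''
    · exact Bcnt_single a
    · rw [List.range'_succ, List.range'_succ, Bcnt_cons_cons, ← List.range'_succ]
      have : bpred (a, a + 1) = false := by rw [bpred_false_iff]; omega
      rw [this]
      simpa using ih (a + 1)

lemma split_first : ∀ (T : List ℕ), Bcnt T ≠ 0 →
    ∃ A e b R', T = A ++ b :: R' ∧ A ≠ [] ∧ Bcnt A = 0 ∧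
      A.getLast? = some e ∧ bpred (e, b) = true := by
  intro T
  induction T with
  | nil => intro h; exact absurd rfl h
  | cons t1 T ih =>
    intro hB
    cases T with
    | nil => exact absurd rfl hB
    | cons t2 rest =>
      rcases hp : bpred (t1, t2) with _ | _
      · -- not a breakpoint, recurse
        rw [Bcnt_cons_cons, hp] at hB
        have hB2 : Bcnt (t2 :: rest) ≠ 0 := by
          intro h0; rw [h0] at hB; simp at hB
        obtain ⟨A', e, b, R', heq, hne, hBA, hlast, hpred⟩ := ih hB2
        cases A' with
        | nil => exact absurd rfl hne
        | cons a0 A'' =>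
          have ha0 : a0 = t2 := by
            have := heq
            rw [List.cons_append] at this
            exact (List.cons.injEq _ _ _ _ ▸ this).1.symm
          subst ha0
          refine ⟨t1 :: a0 :: A'', e, b, R', ?_, by simp, ?_, ?_, hpred⟩
          · rw [List.cons_append, ← heq]
          · rw [Bcnt_cons_cons, hp]
            simpa using hBA
          · rw [List.getLast?_cons_cons]; exact hlast
      · exact ⟨[t1], t1, t2, rest, rfl, by simp, rfl, rfl, hp⟩

lemma bp_eq (π : List ℕ) : bp π = 1 + Bcnt (π.drop 1) := by
  unfold bp Bcnt bpred
  rw [List.drop_drop]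

lemma range_split (n : ℕ) : List.range (n + 2) = 0 :: List.range' 1 (n + 1) 1 := by
  rw [List.range_eq_range', List.range'_succ]

lemma perm_decomp (n : ℕ) (π : List ℕ) (hπ : IsPerm n π) :
    ∃ T, π = 0 :: T ∧ T.Perm (List.range' 1 (n + 1) 1) ∧ T.Nodup ∧
      T.getLast? = some (n + 1) ∧ T.length = n + 1 ∧
      (∀ y ∈ T, 1 ≤ y ∧ y ≤ n + 1) := by
  obtain ⟨hp, h0, hl⟩ := hπ
  have hlen : π.length = n + 2 := by rw [hp.length_eq, List.length_range]
  cases π with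
  | nil => simp at hlen
  | cons h T =>
    have h0' : h = 0 := by simpa using h0
    subst h0'
    rw [range_split] at hp
    have hT : T.Perm (List.range' 1 (n + 1) 1) := hp.cons_inv
    have hTlen : T.length = n + 1 := by simpa using hlen
    have hmem : ∀ y ∈ T, 1 ≤ y ∧ y ≤ n + 1 := by
      intro y hy
      have := hT.mem_iff.mp hy
      rw [List.mem_range'_1] at this
      omega
    have hnd : (0 :: T).Nodup := by
      refine (hp.nodup_iff).mpr ?_
      rw [← range_split]; exact List.nodup_range
    refine ⟨T, rfl, hT, hnd.of_cons, ?_, hTlen, hmem⟩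
    have hn : n < T.length := by omega
    have : T.getD n 0 = n + 1 := by simpa using hl
    rw [List.getLast?_eq_getElem?, hTlen]
    simp only [Nat.add_sub_cancel]
    rw [List.getElem?_eq_getElem hn]
    rw [List.getD_eq_getElem T 0 hn] at this
    rw [this]

lemma mk_isPerm (n : ℕ) (π T' : List ℕ) (hπ : IsPerm n π)
    (hperm : (0 :: T').Perm π) (hlast : T'.getLast? = some (n + 1)) :
    IsPerm n (0 :: T') := by
  have hp : (0 :: T').Perm (List.range (n + 2)) := hperm.trans hπ.1
  have hlen : T'.length = n + 1 := by
    have := hp.length_eq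
    simp [List.length_range] at this
    omega
  refine ⟨hp, rfl, ?_⟩
  have hn : n < T'.length := by omega
  rw [List.getLast?_eq_getElem?, hlen] at hlast
  simp only [Nat.add_sub_cancel] at hlast
  rw [List.getElem?_eq_getElem hn] at hlast
  have : (0 :: T').getD (n + 1) 0 = T'.getD n 0 := rfl
  rw [this, List.getD_eq_getElem T' 0 hn]
  simpa using hlast

lemma bp_one_id (n : ℕ) (π : List ℕ) (hπ : IsPerm n π) (h : Bcnt (π.drop 1) = 0) :
    π = List.range (n + 2) := by
  obtain ⟨T, rfl, hT, hnd, hlast, hlen, hmem⟩ := perm_decomp n π hπ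
  have hdrop : (0 :: T).drop 1 = T := rfl
  rw [hdrop] at h
  have hTne : T ≠ [] := by intro h0; rw [h0] at hlen; simp at hlen
  rcases run_char T hTne h hnd with ⟨a, k, hk, heq⟩ | ⟨a, k, hk, heq⟩
  · have hklen : k = n + 1 := by
      have := hlen; rw [heq, List.length_range'] at this; omega
    have ha1 : a = 1 := by
      have h1T : (1 : ℕ) ∈ T := hT.mem_iff.mpr (by rw [List.mem_range'_1]; omega)
      have haT : a ∈ T := by
        rw [heq, List.mem_range'_1]; omega
      have h1 : 1 ∈ List.range' a k 1 := heq ▸ h1T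
      rw [List.mem_range'_1] at h1
      have := hmem a haT
      omega
    rw [range_split, heq, hklen, ha1]
  · exfalso
    have hklen : k = n + 1 := by
      have := hlen; rw [heq, List.length_reverse, List.length_range'] at this; omega
    have hlast' : T.getLast? = some a := by
      rw [heq, List.getLast?_reverse, range'_head? _ _ (by omega)]
    rw [hlast'] at hlast
    have han : a = n + 1 := by simpa using hlast
    have ha1 : a = 1 := by
      have h1T : (1 : ℕ) ∈ T := hT.mem_iff.mpr (by rw [List.mem_range'_1]; omega)
      have h1 : 1 ∈ List.range' a k 1 := by
        rw [heq, List.mem_reverse] at h1T; exact h1T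
      rw [List.mem_range'_1] at h1
      have haT : a ∈ T := by
        rw [heq, List.mem_reverse, List.mem_range'_1]; omega
      have := hmem a haT
      omega
    omega

lemma drop1_split2 (π : List ℕ) (j : ℕ) (hj : 1 ≤ j) :
    π.drop 1 = (π.drop 1).take (j - 1) ++ π.drop j := by
  conv_lhs => rw [← List.take_append_drop (j - 1) (π.drop 1)]
  rw [List.drop_drop]
  have h1 : 1 + (j - 1) = j := by omega
  rw [h1]

lemma drop1_split3 (π : List ℕ) (j k : ℕ) (hj : 1 ≤ j) (hk : j ≤ k) :
    π.drop 1 = (π.drop 1).take (j - 1) ++ (π.drop j).take (k - j) ++ π.drop k := by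
  conv_lhs => rw [← List.take_append_drop (j - 1) (π.drop 1)]
  rw [List.drop_drop]
  have h1 : 1 + (j - 1) = j := by omega
  rw [h1]
  conv_lhs => rw [← List.take_append_drop (k - j) (π.drop j)]
  rw [List.drop_drop, List.append_assoc]
  have h2 : j + (k - j) = k := by omega
  rw [h2]

lemma take1_len (π : List ℕ) (hne : π ≠ []) : (π.take 1).length = 1 := by
  rw [List.length_take]
  have : 0 < π.length := List.length_pos_iff.mpr hne
  omega

lemma drop1_of_take1 (π L : List ℕ) (hne : π ≠ []) :
    (π.take 1 ++ L).drop 1 = L :=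
  List.drop_left' (take1_len π hne)

lemma bp_decomp2 (π : List ℕ) (j : ℕ) (hj : 1 ≤ j) (hne : π ≠ []) :
    bp π = 1 + Bcnt ((π.drop 1).take (j - 1) ++ π.drop j) := by
  rw [bp_eq, ← drop1_split2 π j hj]

lemma bp_decomp3 (π : List ℕ) (j k : ℕ) (hj : 1 ≤ j) (hk : j ≤ k) (hne : π ≠ []) :
    bp π = 1 + Bcnt ((π.drop 1).take (j - 1) ++ (π.drop j).take (k - j) ++ π.drop k) := by
  rw [bp_eq, ← drop1_split3 π j k hj hk]

lemma bound2 (A C : List ℕ) : Bcnt (A ++ C) ≤ Bcnt (A.reverse ++ C) + 2 := by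
  rw [Bcnt_append, Bcnt_append, Bcnt_reverse]
  have h1 := brk_le_one A C
  omega

lemma bound3 (A B C : List ℕ) :
    Bcnt (A ++ B ++ C) ≤ Bcnt (B ++ A ++ C) + 2 := by
  rw [List.append_assoc, List.append_assoc, Bcnt_append, Bcnt_append, Bcnt_append, Bcnt_append]
  have h1 := brk_le_one A (B ++ C)
  have h2 := brk_le_one B C
  omega

lemma bound3r (A B C : List ℕ) :
    Bcnt (A ++ B ++ C) ≤ Bcnt (B ++ A.reverse ++ C) + 2 := by
  rw [List.append_assoc, List.append_assoc, Bcnt_append, Bcnt_append, Bcnt_append, Bcnt_append,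
    Bcnt_reverse]
  have h1 := brk_le_one A (B ++ C)
  have h2 := brk_le_one B C
  omega

lemma hdec2 (π : List ℕ) (j : ℕ) (hj : 1 ≤ j) :
    π.take 1 ++ ((π.drop 1).take (j - 1) ++ π.drop j) = π := by
  rw [← drop1_split2 π j hj, List.take_append_drop]

lemma hdec3 (π : List ℕ) (j k : ℕ) (hj : 1 ≤ j) (hk : j ≤ k) :
    π.take 1 ++ ((π.drop 1).take (j - 1) ++ ((π.drop j).take (k - j) ++ π.drop k)) = π := by
  conv_rhs => rw [← List.take_append_drop 1 π, drop1_split3 π j k hj hk]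
  rw [List.append_assoc]

lemma lower_step_rev (π : List ℕ) (j : ℕ) (hj : 1 ≤ j) (hne : π ≠ []) :
    bp π ≤ bp (prefixReversal π j) + 2 ∧ (prefixReversal π j).Perm π := by
  have hnew : (prefixReversal π j).drop 1 = ((π.drop 1).take (j - 1)).reverse ++ π.drop j := by
    rw [prefixReversal, List.append_assoc, drop1_of_take1 _ _ hne]
  constructor
  · rw [bp_decomp2 π j hj hne, bp_eq, hnew]
    have := bound2 ((π.drop 1).take (j - 1)) (π.drop j)
    omega
  · rw [prefixReversal]
    conv_rhs => rw [← hdec2 π j hj]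
    rw [List.append_assoc]
    exact (((((π.drop 1).take (j - 1)).reverse_perm).append_right (π.drop j)).append_left _)

lemma lower_step_trans (π : List ℕ) (j k : ℕ) (hj : 1 ≤ j) (hk : j ≤ k) (hne : π ≠ []) :
    bp π ≤ bp (prefixTransposition π j k) + 2 ∧ (prefixTransposition π j k).Perm π := by
  have hnew : (prefixTransposition π j k).drop 1 =
      (π.drop j).take (k - j) ++ (π.drop 1).take (j - 1) ++ π.drop k := by
    rw [prefixTransposition, List.append_assoc, List.append_assoc, drop1_of_take1 _ _ hne,
      ← List.append_assoc]
  constructor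
  · rw [bp_decomp3 π j k hj hk hne, bp_eq, hnew]
    have := bound3 ((π.drop 1).take (j - 1)) ((π.drop j).take (k - j)) (π.drop k)
    omega
  · rw [prefixTransposition]
    conv_rhs => rw [← hdec3 π j k hj hk]
    rw [List.append_assoc, List.append_assoc]
    exact (List.perm_append_comm_assoc _ _ _).append_left _

lemma lower_step_transrev (π : List ℕ) (j k : ℕ) (hj : 1 ≤ j) (hk : j ≤ k) (hne : π ≠ []) :
    bp π ≤ bp (prefixTransreversal π j k) + 2 ∧ (prefixTransreversal π j k).Perm π := by
  have hnew : (prefixTransreversal π j k).drop 1 =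
      (π.drop j).take (k - j) ++ ((π.drop 1).take (j - 1)).reverse ++ π.drop k := by
    rw [prefixTransreversal, List.append_assoc, List.append_assoc, drop1_of_take1 _ _ hne,
      ← List.append_assoc]
  constructor
  · rw [bp_decomp3 π j k hj hk hne, bp_eq, hnew]
    have := bound3r ((π.drop 1).take (j - 1)) ((π.drop j).take (k - j)) (π.drop k)
    omega
  · rw [prefixTransreversal]
    conv_rhs => rw [← hdec3 π j k hj hk]
    rw [List.append_assoc, List.append_assoc]
    refine List.Perm.append_left _ ?_
    refine List.Perm.trans ?_ (List.perm_append_comm_assoc _ _ _)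
    exact ((((π.drop 1).take (j - 1)).reverse_perm).append_right (π.drop k)).append_left _

lemma glast_app (u v : List ℕ) (h : v ≠ []) : (u ++ v).getLast? = v.getLast? := by
  rw [List.getLast?_append]
  rcases hv : v.getLast? with _ | a
  · exact absurd (List.getLast?_eq_none_iff.mp hv) h
  · rfl

lemma head_app (u v : List ℕ) (h : u ≠ []) : (u ++ v).head? = u.head? := by
  rw [List.head?_append]
  rcases hu : u.head? with _ | a
  · exact absurd (List.head?_eq_none_iff.mp hu) h
  · rfl

lemma brk_eval (U V : List ℕ) (a b : ℕ) (hU : U.getLast? = some a) (hV : V.head? = some b) :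
    brk U V = if bpred (a, b) then 1 else 0 := by
  unfold brk; rw [hU, hV]

lemma ne_nil_of_getLast? {l : List ℕ} {a : ℕ} (h : l.getLast? = some a) : l ≠ [] := by
  intro h0; rw [h0] at h; simp at h

lemma ne_nil_of_head? {l : List ℕ} {a : ℕ} (h : l.head? = some a) : l ≠ [] := by
  intro h0; rw [h0] at h; simp at h

lemma ite_tt : (if (true = true) then (1:ℕ) else 0) = 1 := rfl
lemma ite_ff : (if (false = true) then (1:ℕ) else 0) = 0 := rfl

lemma L_tau1 (A B C : List ℕ) (v e b lB : ℕ)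
    (hA : A.getLast? = some e) (hBh : B.head? = some b) (hBl : B.getLast? = some lB)
    (h1 : bpred (e, b) = true) (h2 : bpred (lB, v) = true) (h3 : bpred (e, v) = false) :
    Bcnt (B ++ A ++ v :: C) < Bcnt (A ++ B ++ v :: C) := by
  have hBne : B ≠ [] := ne_nil_of_head? hBh
  have hAne : A ≠ [] := ne_nil_of_getLast? hA
  rw [show (v :: C) = [v] ++ C from rfl]
  simp only [Bcnt_append, Bcnt_single]
  rw [brk_eval A B e b hA hBh,
    brk_eval (A ++ B) ([v] ++ C) lB v (by rw [glast_app _ _ hBne]; exact hBl) rfl,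
    brk_eval (B ++ A) ([v] ++ C) e v (by rw [glast_app _ _ hAne]; exact hA) rfl,
    h1, h2, h3, ite_tt, ite_ff]
  have := brk_le_one B A
  omega

lemma L_btau (A B C : List ℕ) (v c e b lB : ℕ)
    (hA : A.getLast? = some e) (hBh : B.head? = some b) (hBl : B.getLast? = some lB)
    (hCh : C.head? = some c)
    (h1 : bpred (e, b) = true) (h2 : bpred (lB, v) = false) (h3 : bpred (v, c) = true)
    (h4 : bpred (v, e) = false) :
    Bcnt ((B ++ [v]) ++ A.reverse ++ C) < Bcnt (A ++ B ++ v :: C) := by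
  have hBne : B ≠ [] := ne_nil_of_head? hBh
  have hAne : A ≠ [] := ne_nil_of_getLast? hA
  rw [show (v :: C) = [v] ++ C from rfl]
  simp only [Bcnt_append, Bcnt_single, Bcnt_reverse]
  rw [brk_eval A B e b hA hBh,
    brk_eval (A ++ B) ([v] ++ C) lB v (by rw [glast_app _ _ hBne]; exact hBl) rfl,
    brk_eval [v] C v c rfl hCh,
    brk_eval B [v] lB v hBl rfl,
    brk_eval (B ++ [v]) A.reverse v e (by rw [glast_app _ _ (by simp)]; rfl)
      (by rw [List.head?_reverse]; exact hA),
    h1, h2, h3, h4, ite_tt, ite_ff]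
  have := brk_le_one ((B ++ [v]) ++ A.reverse) C
  omega

lemma L_tau2 (A B C : List ℕ) (v c e b lB x : ℕ)
    (hA : A.getLast? = some e) (hAh : A.head? = some x)
    (hBh : B.head? = some b) (hBl : B.getLast? = some lB)
    (hCh : C.head? = some c)
    (h1 : bpred (e, b) = true) (h2 : bpred (lB, v) = false) (h3 : bpred (v, c) = true)
    (h4 : bpred (v, x) = false) :
    Bcnt ((B ++ [v]) ++ A ++ C) < Bcnt (A ++ B ++ v :: C) := by
  have hBne : B ≠ [] := ne_nil_of_head? hBh
  rw [show (v :: C) = [v] ++ C from rfl]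
  simp only [Bcnt_append, Bcnt_single]
  rw [brk_eval A B e b hA hBh,
    brk_eval (A ++ B) ([v] ++ C) lB v (by rw [glast_app _ _ hBne]; exact hBl) rfl,
    brk_eval [v] C v c rfl hCh,
    brk_eval B [v] lB v hBl rfl,
    brk_eval (B ++ [v]) A v x (by rw [glast_app _ _ (by simp)]; rfl) hAh,
    h1, h2, h3, h4, ite_tt, ite_ff]
  have := brk_le_one ((B ++ [v]) ++ A) C
  omega

lemma L_rev (D C : List ℕ) (v x lD : ℕ)
    (hDh : D.head? = some x) (hDl : D.getLast? = some lD)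
    (h0 : bpred (x, v) = false) (h1 : bpred (lD, v) = true) :
    Bcnt (D.reverse ++ v :: C) < Bcnt (D ++ v :: C) := by
  rw [show (v :: C) = [v] ++ C from rfl]
  simp only [Bcnt_append, Bcnt_single, Bcnt_reverse]
  rw [brk_eval D ([v] ++ C) lD v hDl rfl,
    brk_eval D.reverse ([v] ++ C) x v (by rw [List.getLast?_reverse]; exact hDh) rfl,
    h0, h1, ite_tt, ite_ff]
  omega

lemma shape_tau1 (A B C : List ℕ) (v : ℕ) :
    prefixTransposition (0 :: (A ++ B ++ v :: C)) (A.length + 1) (A.length + B.length + 1)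
      = 0 :: (B ++ A ++ v :: C) := by
  unfold prefixTransposition
  have h3 : (A ++ B ++ v :: C).take (A.length + 1 - 1) = A := by
    rw [Nat.add_sub_cancel, List.append_assoc]; exact List.take_left' rfl
  have h4 : (0 :: (A ++ B ++ v :: C)).drop (A.length + 1) = B ++ v :: C := by
    rw [List.drop_succ_cons, List.append_assoc]; exact List.drop_left' rfl
  have h5 : (B ++ v :: C).take (A.length + B.length + 1 - (A.length + 1)) = B := by
    have he : A.length + B.length + 1 - (A.length + 1) = B.length := by omega
    rw [he]; exact List.take_left' rfl
  have h6 : (0 :: (A ++ B ++ v :: C)).drop (A.length + B.length + 1) = v :: C := by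
    rw [List.drop_succ_cons]; exact List.drop_left' (by simp)
  rw [show ((0 : ℕ) :: (A ++ B ++ v :: C)).take 1 = [0] from rfl,
    show ((0 : ℕ) :: (A ++ B ++ v :: C)).drop 1 = A ++ B ++ v :: C from rfl, h3, h4, h5, h6]
  rfl

lemma shape_tau2 (A B C : List ℕ) (v : ℕ) :
    prefixTransposition (0 :: (A ++ B ++ v :: C)) (A.length + 1) (A.length + B.length + 2)
      = 0 :: ((B ++ [v]) ++ A ++ C) := by
  unfold prefixTransposition
  have h3 : (A ++ B ++ v :: C).take (A.length + 1 - 1) = A := by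
    rw [Nat.add_sub_cancel, List.append_assoc]; exact List.take_left' rfl
  have h4 : (0 :: (A ++ B ++ v :: C)).drop (A.length + 1) = B ++ v :: C := by
    rw [List.drop_succ_cons, List.append_assoc]; exact List.drop_left' rfl
  have h5 : (B ++ v :: C).take (A.length + B.length + 2 - (A.length + 1)) = B ++ [v] := by
    have he : A.length + B.length + 2 - (A.length + 1) = B.length + 1 := by omega
    rw [he, List.append_cons]; exact List.take_left' (by simp)
  have h6 : (0 :: (A ++ B ++ v :: C)).drop (A.length + B.length + 2) = C := by
    rw [show A.length + B.length + 2 = (A.length + B.length + 1) + 1 from rfl,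
      List.drop_succ_cons, List.append_cons]
    exact List.drop_left' (by simp; omega)
  rw [show ((0 : ℕ) :: (A ++ B ++ v :: C)).take 1 = [0] from rfl,
    show ((0 : ℕ) :: (A ++ B ++ v :: C)).drop 1 = A ++ B ++ v :: C from rfl, h3, h4, h5, h6]
  rfl

lemma shape_btau (A B C : List ℕ) (v : ℕ) :
    prefixTransreversal (0 :: (A ++ B ++ v :: C)) (A.length + 1) (A.length + B.length + 2)
      = 0 :: ((B ++ [v]) ++ A.reverse ++ C) := by
  unfold prefixTransreversal
  have h3 : (A ++ B ++ v :: C).take (A.length + 1 - 1) = A := by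
    rw [Nat.add_sub_cancel, List.append_assoc]; exact List.take_left' rfl
  have h4 : (0 :: (A ++ B ++ v :: C)).drop (A.length + 1) = B ++ v :: C := by
    rw [List.drop_succ_cons, List.append_assoc]; exact List.drop_left' rfl
  have h5 : (B ++ v :: C).take (A.length + B.length + 2 - (A.length + 1)) = B ++ [v] := by
    have he : A.length + B.length + 2 - (A.length + 1) = B.length + 1 := by omega
    rw [he, List.append_cons]; exact List.take_left' (by simp)
  have h6 : (0 :: (A ++ B ++ v :: C)).drop (A.length + B.length + 2) = C := by
    rw [show A.length + B.length + 2 = (A.length + B.length + 1) + 1 from rfl,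
      List.drop_succ_cons, List.append_cons]
    exact List.drop_left' (by simp; omega)
  rw [show ((0 : ℕ) :: (A ++ B ++ v :: C)).take 1 = [0] from rfl,
    show ((0 : ℕ) :: (A ++ B ++ v :: C)).drop 1 = A ++ B ++ v :: C from rfl, h3, h4, h5, h6]
  rfl

lemma shape_rev (D C : List ℕ) (v : ℕ) :
    prefixReversal (0 :: (D ++ v :: C)) (D.length + 1) = 0 :: (D.reverse ++ v :: C) := by
  unfold prefixReversal
  have h3 : (D ++ v :: C).take (D.length + 1 - 1) = D := by
    rw [Nat.add_sub_cancel]; exact List.take_left' rfl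
  have h4 : (0 :: (D ++ v :: C)).drop (D.length + 1) = v :: C := by
    rw [List.drop_succ_cons]; exact List.drop_left' rfl
  rw [show ((0 : ℕ) :: (D ++ v :: C)).take 1 = [0] from rfl,
    show ((0 : ℕ) :: (D ++ v :: C)).drop 1 = D ++ v :: C from rfl, h3, h4]
  rfl

lemma nodup_facts {A B C : List ℕ} {v : ℕ} (h : (A ++ B ++ v :: C).Nodup) :
    (∀ p ∈ A, ∀ q ∈ B, p ≠ q) ∧ (∀ p ∈ A, p ≠ v) ∧ (∀ p ∈ A, ∀ q ∈ C, p ≠ q) ∧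
    (∀ p ∈ B, p ≠ v) ∧ (∀ p ∈ B, ∀ q ∈ C, p ≠ q) ∧ (∀ q ∈ C, v ≠ q) := by
  rw [List.append_assoc, List.nodup_append', List.nodup_append', List.nodup_cons] at h
  obtain ⟨hA, ⟨hB, ⟨hvC, hC⟩, hd2⟩, hd1⟩ := h
  refine ⟨?_, ?_, ?_, ?_, ?_, ?_⟩
  · intro p hp q hq he; subst he; exact hd1 hp (by simp [hq])
  · intro p hp he; subst he; exact hd1 hp (by simp)
  · intro p hp q hq he; subst he; exact hd1 hp (by simp [hq])
  · intro p hp he; subst he; exact hd2 hp (by simp)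
  · intro p hp q hq he; subst he; exact hd2 hp (by simp [hq])
  · intro q hq he; exact hvC (he ▸ hq)

lemma perm_helper1 (A B C : List ℕ) (v : ℕ) : (B ++ A ++ v :: C).Perm (A ++ B ++ v :: C) :=
  List.perm_append_comm.append_right _

lemma perm_helper2 (A B C : List ℕ) (v : ℕ) : ((B ++ [v]) ++ A ++ C).Perm (A ++ B ++ v :: C) := by
  rw [List.append_cons (A ++ B) v C]
  refine List.Perm.append_right C ?_
  exact List.perm_append_comm.trans (List.Perm.of_eq (by rw [List.append_assoc]))

lemma perm_helper3 (A B C : List ℕ) (v : ℕ) :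
    ((B ++ [v]) ++ A.reverse ++ C).Perm (A ++ B ++ v :: C) := by
  rw [List.append_assoc (B ++ [v]) A.reverse C]
  refine List.Perm.trans ((A.reverse_perm.append_right C).append_left _) ?_
  have := perm_helper2 A B C v
  rwa [List.append_assoc (B ++ [v]) A C] at this

lemma perm_helper4 (D C : List ℕ) (v : ℕ) : (D.reverse ++ v :: C).Perm (D ++ v :: C) :=
  D.reverse_perm.append_right _

lemma common_step (n : ℕ) (A B C : List ℕ) (v e b : ℕ)
    (hπ : IsPerm n (0 :: (A ++ B ++ v :: C)))
    (hAlast : A.getLast? = some e) (hBh : B.head? = some b)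
    (hpredb : bpred (e, b) = true)
    (hev : bpred (e, v) = false) :
    ∃ o : PrefOp, o.Valid n ∧ IsPerm n (o.apply (0 :: (A ++ B ++ v :: C))) ∧
      bp (o.apply (0 :: (A ++ B ++ v :: C))) < bp (0 :: (A ++ B ++ v :: C)) := by
  obtain ⟨T, hTeq, hT, hnd, hlast, hlen, hmem⟩ := perm_decomp n _ hπ
  have hTeq' : T = A ++ B ++ v :: C := by injection hTeq with h1 h2; exact h2.symm
  subst hTeq'
  have hAne : A ≠ [] := ne_nil_of_getLast? hAlast
  have hBne : B ≠ [] := ne_nil_of_head? hBh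
  obtain ⟨lB, hBl⟩ : ∃ lB, B.getLast? = some lB := by
    rcases h : B.getLast? with _ | lB
    · exact absurd (List.getLast?_eq_none_iff.mp h) hBne
    · exact ⟨lB, rfl⟩
  have heA : e ∈ A := List.mem_of_getLast? hAlast
  have hlBB : lB ∈ B := List.mem_of_getLast? hBl
  obtain ⟨hAB, hAv, hAC, hBv, hBC, hvC⟩ := nodup_facts hnd
  have hlBe : lB ≠ e := fun h => hAB e heA lB hlBB h.symm
  have hlastvC : (v :: C).getLast? = some (n + 1) := by
    rw [List.append_assoc, glast_app _ _ (by simp), glast_app _ _ (by simp)] at hlast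
    exact hlast
  have hlenA : 1 ≤ A.length := List.length_pos_iff.mpr hAne
  have hlenB : 1 ≤ B.length := List.length_pos_iff.mpr hBne
  have hlen' : A.length + B.length + 1 + C.length = n + 1 := by
    simp at hlen; omega
  by_cases hgb : bpred (lB, v) = true
  · -- good case: prefix transposition τ(1, |A|+1, |A|+|B|+1)
    refine ⟨.trans (A.length + 1) (A.length + B.length + 1), ⟨by omega, by omega, by omega⟩, ?_, ?_⟩
    · show IsPerm n (prefixTransposition _ _ _)
      rw [shape_tau1]
      refine mk_isPerm n _ _ hπ ((perm_helper1 A B C v).cons 0) ?_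
      rw [List.append_assoc, glast_app _ _ (by simp), glast_app _ _ (by simp)]
      exact hlastvC
    · show bp (prefixTransposition _ _ _) < _
      rw [shape_tau1, bp_eq, bp_eq]
      have : (0 :: (B ++ A ++ v :: C)).drop 1 = B ++ A ++ v :: C := rfl
      rw [this, show ((0:ℕ) :: (A ++ B ++ v :: C)).drop 1 = A ++ B ++ v :: C from rfl]
      have := L_tau1 A B C v e b lB hAlast hBh hBl hpredb hgb hev
      omega
  · -- bad case
    have hgb' : bpred (lB, v) = false := by
      rcases h : bpred (lB, v) with _ | _
      · rfl
      · exact absurd h hgb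
    have hlBv : lB + 1 = v ∨ v + 1 = lB := (bpred_false_iff _ _).mp hgb'
    have hevv : e + 1 = v ∨ v + 1 = e := (bpred_false_iff _ _).mp hev
    have hlBle : lB ≤ n + 1 := (hmem lB (by simp [hlBB])).2
    have hele : e ≤ n + 1 := (hmem e (by simp [heA])).2
    have hCne : C ≠ [] := by
      intro h0
      subst h0
      have hv : v = n + 1 := by simpa using hlastvC
      rcases hlBv with h1 | h1 <;> rcases hevv with h2 | h2 <;> omega
    rcases C with _ | ⟨c, C'⟩
    · exact absurd rfl hCne
    have hce : c ≠ e := fun h => hAC e heA c (by simp) (h.symm) |>.elim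
    have hclB : c ≠ lB := fun h => hBC lB hlBB c (by simp) (h.symm) |>.elim
    have hvc : bpred (v, c) = true := by
      rcases h : bpred (v, c) with _ | _
      · exfalso
        have := (bpred_false_iff v c).mp h
        rcases this with h1 | h1 <;> rcases hlBv with h2 | h2 <;> rcases hevv with h3 | h3 <;> omega
      · rfl
    have hve : bpred (v, e) = false := by rw [bpred_symm]; exact hev
    refine ⟨.transrev (A.length + 1) (A.length + B.length + 2),
      ⟨by omega, by omega, by simp at hlen' ⊢; omega⟩, ?_, ?_⟩
    · show IsPerm n (prefixTransreversal _ _ _)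
      rw [shape_btau]
      refine mk_isPerm n _ _ hπ ((perm_helper3 A B (c :: C') v).cons 0) ?_
      rw [List.append_assoc, glast_app _ _ (by simp), glast_app _ _ (by simp)]
      have : (v :: c :: C').getLast? = (c :: C').getLast? := by
        rw [show v :: c :: C' = [v] ++ c :: C' from rfl, glast_app _ _ (by simp)]
      rw [← this]
      exact hlastvC
    · show bp (prefixTransreversal _ _ _) < _
      rw [shape_btau, bp_eq, bp_eq]
      rw [show ((0:ℕ) :: ((B ++ [v]) ++ A.reverse ++ c :: C')).drop 1
            = (B ++ [v]) ++ A.reverse ++ c :: C' from rfl,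
          show ((0:ℕ) :: (A ++ B ++ v :: c :: C')).drop 1 = A ++ B ++ v :: c :: C' from rfl]
      have := L_btau A B (c :: C') v c e b lB hAlast hBh hBl rfl hpredb hgb' hvc hve
      omega

lemma caseC_step (n k : ℕ) (hk : 2 ≤ k) (A B C : List ℕ) (b : ℕ)
    (hπ : IsPerm n (0 :: (A ++ B ++ (k + 1) :: C)))
    (hA1 : A.getLast? = some 1) (hAh : A.head? = some k)
    (hfirst : (B ++ (k + 1) :: C).head? = some b)
    (hpredb : bpred (1, b) = true) :
    ∃ o : PrefOp, o.Valid n ∧ IsPerm n (o.apply (0 :: (A ++ B ++ (k + 1) :: C))) ∧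
      bp (o.apply (0 :: (A ++ B ++ (k + 1) :: C))) < bp (0 :: (A ++ B ++ (k + 1) :: C)) := by
  set v := k + 1 with hv
  obtain ⟨T, hTeq, hT, hnd, hlast, hlen, hmem⟩ := perm_decomp n _ hπ
  have hTeq' : T = A ++ B ++ v :: C := by injection hTeq with h1 h2; exact h2.symm
  subst hTeq'
  have hAne : A ≠ [] := ne_nil_of_head? hAh
  have h1A : (1 : ℕ) ∈ A := List.mem_of_getLast? hA1
  have hkA : k ∈ A := List.mem_of_mem_head? (by rw [hAh]; simp)
  obtain ⟨hAB, hAv, hAC, hBv, hBC, hvC⟩ := nodup_facts hnd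
  have hlastvC : (v :: C).getLast? = some (n + 1) := by
    rw [List.append_assoc, glast_app _ _ (by simp), glast_app _ _ (by simp)] at hlast
    exact hlast
  have hlenA2 : 2 ≤ A.length := by
    rcases A with _ | ⟨a0, A'⟩
    · simp at hAh
    rcases A' with _ | ⟨a1, A''⟩
    · simp at hAh hA1
      omega
    · simp
  have hlen' : A.length + B.length + 1 + C.length = n + 1 := by
    simp at hlen; omega
  obtain ⟨lD, hDl⟩ : ∃ lD, (A ++ B).getLast? = some lD := by
    rcases h : (A ++ B).getLast? with _ | lD
    · rw [List.getLast?_eq_none_iff] at h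
      simp [hAne] at h
    · exact ⟨lD, rfl⟩
  have hDh : (A ++ B).head? = some k := by rw [head_app _ _ hAne]; exact hAh
  by_cases hgd : bpred (lD, v) = true
  · -- good: prefix reversal
    refine ⟨.rev ((A ++ B).length + 1), ⟨by simp; omega, by simp; omega⟩, ?_, ?_⟩
    · show IsPerm n (prefixReversal _ _)
      rw [shape_rev (A ++ B) C v]
      refine mk_isPerm n _ _ hπ ((perm_helper4 (A ++ B) C v).cons 0) ?_
      rw [glast_app _ _ (by simp)]
      exact hlastvC
    · show bp (prefixReversal _ _) < _
      rw [shape_rev (A ++ B) C v, bp_eq, bp_eq]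
      rw [show ((0:ℕ) :: ((A ++ B).reverse ++ v :: C)).drop 1 = (A ++ B).reverse ++ v :: C from rfl,
        show ((0:ℕ) :: (A ++ B ++ v :: C)).drop 1 = A ++ B ++ v :: C from rfl]
      have := L_rev (A ++ B) C v k lD hDh hDl (by rw [bpred_false_iff]; omega) hgd
      omega
  · -- bad: prefix transposition with k' = |A|+|B|+2
    have hgd' : bpred (lD, v) = false := by
      rcases h : bpred (lD, v) with _ | _
      · rfl
      · exact absurd h hgd
    have hBne : B ≠ [] := by
      intro h0
      subst h0
      rw [List.append_nil, hA1] at hDl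
      have : lD = 1 := by injection hDl with h'; exact h'.symm
      subst this
      rw [bpred_false_iff] at hgd'
      omega
    have hBh : B.head? = some b := by rw [head_app _ _ hBne] at hfirst; exact hfirst
    have hBl : B.getLast? = some lD := by rw [glast_app _ _ hBne] at hDl; exact hDl
    have hlDB : lD ∈ B := List.mem_of_getLast? hBl
    have hlDk : lD ≠ k := fun h => hAB k hkA lD hlDB h.symm
    have hlD : lD = v + 1 := by
      rw [bpred_false_iff] at hgd'
      rcases hgd' with h1 | h1
      · exfalso; exact hlDk (by omega)
      · omega
    have hlDle : lD ≤ n + 1 := (hmem lD (by simp [hlDB])).2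
    have hCne : C ≠ [] := by
      intro h0
      subst h0
      have : v = n + 1 := by simpa using hlastvC
      omega
    rcases C with _ | ⟨c, C'⟩
    · exact absurd rfl hCne
    have hck : c ≠ k := fun h => hAC k hkA c (by simp) h.symm |>.elim
    have hclD : c ≠ lD := fun h => hBC lD hlDB c (by simp) h.symm |>.elim
    have hvc : bpred (v, c) = true := by
      rcases h : bpred (v, c) with _ | _
      · exfalso
        rw [bpred_false_iff] at h
        omega
      · rfl
    refine ⟨.trans (A.length + 1) (A.length + B.length + 2),
      ⟨by omega, by simp, by simp at hlen' ⊢; omega⟩, ?_, ?_⟩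
    · show IsPerm n (prefixTransposition _ _ _)
      rw [shape_tau2]
      refine mk_isPerm n _ _ hπ ((perm_helper2 A B (c :: C') v).cons 0) ?_
      rw [List.append_assoc, glast_app _ _ (by simp), glast_app _ _ (by simp)]
      have : (v :: c :: C').getLast? = (c :: C').getLast? := by
        rw [show v :: c :: C' = [v] ++ c :: C' from rfl, glast_app _ _ (by simp)]
      rw [← this]
      exact hlastvC
    · show bp (prefixTransposition _ _ _) < _
      rw [shape_tau2, bp_eq, bp_eq]
      rw [show ((0:ℕ) :: ((B ++ [v]) ++ A ++ c :: C')).drop 1 = (B ++ [v]) ++ A ++ c :: C' from rfl,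
        show ((0:ℕ) :: (A ++ B ++ v :: c :: C')).drop 1 = A ++ B ++ v :: c :: C' from rfl]
      have := L_tau2 A B (c :: C') v c 1 b lD k hA1 hAh hBh hBl rfl hpredb
        (by rw [bpred_false_iff]; omega) hvc (by rw [bpred_false_iff]; omega)
      omega

lemma step_lemma (n : ℕ) (π : List ℕ) (hπ : IsPerm n π) (h2 : Bcnt (π.drop 1) ≠ 0) :
    ∃ o : PrefOp, o.Valid n ∧ IsPerm n (o.apply π) ∧ bp (o.apply π) < bp π := by
  obtain ⟨T, rfl, hT, hnd, hlast, hlen, hmem⟩ := perm_decomp n π hπ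
  rw [show ((0:ℕ) :: T).drop 1 = T from rfl] at h2
  obtain ⟨A, e, b, R', hTeq, hAne, hBA, hAlast, hpredb⟩ := split_first T h2
  subst hTeq
  have hndA : A.Nodup := List.Nodup.of_append_left hnd
  have hdisj : A.Disjoint (b :: R') := (List.nodup_append'.mp hnd).2.2
  have hlastR : (b :: R').getLast? = some (n + 1) := by
    rw [glast_app _ _ (by simp)] at hlast; exact hlast
  have hn1R : (n + 1) ∈ b :: R' := List.mem_of_getLast? hlastR
  have heA : e ∈ A := List.mem_of_getLast? hAlast
  have hmemA : ∀ y ∈ A, 1 ≤ y ∧ y ≤ n := by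
    intro y hy
    have h1 := hmem y (by simp [hy])
    have h2 : y ≠ n + 1 := by
      intro h0; exact hdisj hy (h0 ▸ hn1R)
    omega
  have hpredb' := (bpred_true_iff e b).mp hpredb
  rcases run_char A hAne hBA hndA with ⟨a, k, hk, hAeq⟩ | ⟨a, k, hk, hAeq⟩
  · -- ascending run: v = e + 1
    have he : e = a + k - 1 := by
      rw [hAeq, range'_getLast? _ _ hk] at hAlast
      injection hAlast with h'; exact h'.symm
    have hen : e ≤ n := (hmemA e heA).2
    have hvT : e + 1 ∈ A ++ b :: R' := by
      rw [List.Perm.mem_iff hT, List.mem_range'_1]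
      omega
    have hvA : e + 1 ∉ A := by
      rw [hAeq, List.mem_range'_1]
      omega
    have hvb : e + 1 ≠ b := hpredb'.1
    have hvR' : e + 1 ∈ R' := by
      rcases List.mem_append.mp hvT with h | h
      · exact absurd h hvA
      · rcases List.mem_cons.mp h with h | h
        · exact absurd h hvb
        · exact h
    obtain ⟨B', C, hR'eq⟩ := List.append_of_mem hvR'
    subst hR'eq
    have hgrp : A ++ b :: (B' ++ (e + 1) :: C) = A ++ (b :: B') ++ (e + 1) :: C := by
      rw [List.append_assoc]; rfl
    rw [hgrp] at hπ ⊢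
    exact common_step n A (b :: B') C (e + 1) e b hπ hAlast rfl hpredb
      (by rw [bpred_false_iff]; omega)
  · -- descending run
    have he : e = a := by
      rw [hAeq, List.getLast?_reverse, range'_head? _ _ (by omega)] at hAlast
      injection hAlast with h'; exact h'.symm
    subst he
    have haA : e ∈ A := heA
    have hxA : A.head? = some (e + k - 1) := by
      rw [hAeq, List.head?_reverse, range'_getLast? _ _ (by omega)]
    have hea : 1 ≤ e := (hmemA e heA).1
    by_cases ha2 : 2 ≤ e
    · -- v = e - 1
      have hvT : e - 1 ∈ A ++ b :: R' := by
        rw [List.Perm.mem_iff hT, List.mem_range'_1]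
        have := (hmemA e heA).2
        omega
      have hvA : e - 1 ∉ A := by
        rw [hAeq, List.mem_reverse, List.mem_range'_1]
        omega
      have hvb : e - 1 ≠ b := by
        intro h0
        exact hpredb'.2 (by omega)
      have hvR' : e - 1 ∈ R' := by
        rcases List.mem_append.mp hvT with h | h
        · exact absurd h hvA
        · rcases List.mem_cons.mp h with h | h
          · exact absurd h hvb
          · exact h
      obtain ⟨B', C, hR'eq⟩ := List.append_of_mem hvR'
      subst hR'eq
      have hgrp : A ++ b :: (B' ++ (e - 1) :: C) = A ++ (b :: B') ++ (e - 1) :: C := by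
        rw [List.append_assoc]; rfl
      rw [hgrp] at hπ ⊢
      exact common_step n A (b :: B') C (e - 1) e b hπ hAlast rfl hpredb
        (by rw [bpred_false_iff]; omega)
    · -- e = 1: case C
      have he1 : e = 1 := by omega
      subst he1
      have hxA' : A.head? = some k := by
        rw [hxA]
        congr 1
        omega
      have hkA : k ∈ A := List.mem_of_mem_head? (by rw [hxA']; simp)
      have hkn : k ≤ n := (hmemA k hkA).2
      have hvT : k + 1 ∈ A ++ b :: R' := by
        rw [List.Perm.mem_iff hT, List.mem_range'_1]
        omega
      have hvA : k + 1 ∉ A := by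
        rw [hAeq, List.mem_reverse, List.mem_range'_1]
        omega
      have hvR : k + 1 ∈ b :: R' := by
        rcases List.mem_append.mp hvT with h | h
        · exact absurd h hvA
        · exact h
      obtain ⟨B, C, hReq⟩ := List.append_of_mem hvR
      have hfirst : (B ++ (k + 1) :: C).head? = some b := by rw [← hReq]; rfl
      rw [hReq] at hπ ⊢
      have hgrp : A ++ (B ++ (k + 1) :: C) = A ++ B ++ (k + 1) :: C := by
        rw [List.append_assoc]
      rw [hgrp] at hπ ⊢
      exact caseC_step n k hk A B C b hπ hAlast hxA' hfirst hpredb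

lemma bp_pos (π : List ℕ) : 1 ≤ bp π := by rw [bp_eq]; omega

lemma upper_bound (n : ℕ) : ∀ (m : ℕ) (π : List ℕ), IsPerm n π → bp π ≤ m →
    ∃ ops : List PrefOp, (∀ o ∈ ops, o.Valid n) ∧
      applySeq π ops = List.range (n + 2) ∧ ops.length ≤ bp π - 1 := by
  intro m
  induction m with
  | zero => intro π hπ h; have := bp_pos π; omega
  | succ m ih =>
    intro π hπ h
    by_cases h0 : Bcnt (π.drop 1) = 0
    · refine ⟨[], by simp, ?_, by simp⟩
      show π = _
      exact bp_one_id n π hπ h0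
    · obtain ⟨o, hov, hop, hobp⟩ := step_lemma n π hπ h0
      obtain ⟨ops', hv', happ', hlen'⟩ := ih (o.apply π) hop (by omega)
      refine ⟨o :: ops', ?_, ?_, ?_⟩
      · intro o' ho'
        rcases List.mem_cons.mp ho' with h' | h'
        · exact h' ▸ hov
        · exact hv' o' h'
      · show applySeq (o.apply π) ops' = _
        exact happ'
      · have h1 := bp_pos (o.apply π)
        simp only [List.length_cons]
        omega

lemma lower_bound (n : ℕ) : ∀ (ops : List PrefOp) (π : List ℕ), (∀ o ∈ ops, o.Valid n) →
    π ≠ [] → applySeq π ops = List.range (n + 2) → bp π ≤ 2 * ops.length + 1 := by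
  intro ops
  induction ops with
  | nil =>
    intro π _ hne happ
    have : π = List.range (n + 2) := happ
    subst this
    rw [bp_eq, range_split,
      show ((0:ℕ) :: List.range' 1 (n+1)).drop 1 = List.range' 1 (n+1) from rfl, Bcnt_range']
    omega
  | cons o ops ih =>
    intro π hval hne happ
    have happ' : applySeq (o.apply π) ops = List.range (n + 2) := happ
    have hov : o.Valid n := hval o (by simp)
    have hstep : bp π ≤ bp (o.apply π) + 2 ∧ (o.apply π).Perm π := by
      rcases o with j | ⟨j, k⟩ | ⟨j, k⟩
      · obtain ⟨h1, h2⟩ := hov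
        simp only [PrefOp.apply]
        exact lower_step_rev π j (by omega) hne
      · obtain ⟨h1, h2, h3⟩ := hov
        simp only [PrefOp.apply]
        exact lower_step_trans π j k (by omega) (by omega) hne
      · obtain ⟨h1, h2, h3⟩ := hov
        simp only [PrefOp.apply]
        exact lower_step_transrev π j k (by omega) (by omega) hne
    have := ih (o.apply π) (fun o' ho' => hval o' (by simp [ho'])) (by
      intro h0
      have hl := hstep.2.length_eq
      rw [h0] at hl
      simp at hl
      exact hne (List.length_eq_zero_iff.mp hl.symm)) happ'
    simp only [List.length_cons]
    omega


/-- `⌊b(π)/2⌋ ≤ d_RTT(π) ≤ b(π) − 1`. -/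
theorem sortRTT_bounds
    (n : ℕ) (π : List ℕ) (hπ : IsPerm n π) :
    (∀ ops : List PrefOp, ValidSeq n ops →
        applySeq π ops = List.range (n + 2) → bp π / 2 ≤ ops.length) ∧
    (∃ ops : List PrefOp, ValidSeq n ops ∧
        applySeq π ops = List.range (n + 2) ∧ ops.length ≤ bp π - 1) := by
  constructor
  · intro ops hval happ
    have hne : π ≠ [] := by
      have hl := hπ.1.length_eq
      rw [List.length_range] at hl
      intro h0; rw [h0] at hl; simp at hl
    have := lower_bound n ops π hval hne happ
    omega
  · exact upper_bound n (bp π) π hπ le_rfl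
end

section
/- For every permutation π = [π_0, π_1, …, π_{n+1}] and every prefix transposition τ = τ(1,j,k) with 2 ≤ j < k ≤ n+1, the redefined breakpoint count decreases by at most three, i.e., b′(π) − b′(π·τ) ≤ 3. -/
lemma zipAdj_cons_cons (a b : ℕ) (l : List ℕ) :
    (a :: b :: l).zip ((a :: b :: l).drop 1) =
      (a, b) :: (b :: l).zip ((b :: l).drop 1) := by
  simp

lemma bp'_cons_cons (a b : ℕ) (l : List ℕ) :
    bp' (a :: b :: l) = bp' (b :: l) +
      (if !(a + 1 == b || b + 1 == a) then 1 else 0) := by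
  simp [bp', List.countP_cons]

lemma bp'_if_le (a b : ℕ) : (if !(a + 1 == b || b + 1 == a) then 1 else 0) ≤ 1 := by
  split <;> simp

lemma bp'_append_ge (x y : List ℕ) : bp' x + bp' y ≤ bp' (x ++ y) := by
  induction x with
  | nil => simp [bp']
  | cons a x ih =>
    cases x with
    | nil =>
      cases y with
      | nil => simp [bp']
      | cons b y =>
        have := bp'_cons_cons a b y
        have : bp' [a] = 0 := by simp [bp']
        simp only [List.singleton_append]
        omega
    | cons a' x' =>
      have h1 := bp'_cons_cons a a' x'
      have h2 := bp'_cons_cons a a' (x' ++ y)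
      simp only [List.cons_append] at *
      omega

lemma bp'_append_le (x y : List ℕ) : bp' (x ++ y) ≤ bp' x + bp' y + 1 := by
  induction x with
  | nil => simp [bp']
  | cons a x ih =>
    cases x with
    | nil =>
      cases y with
      | nil => simp [bp']
      | cons b y =>
        have := bp'_cons_cons a b y
        have := bp'_if_le a b
        have : bp' [a] = 0 := by simp [bp']
        simp only [List.singleton_append]
        omega
    | cons a' x' =>
      have h1 := bp'_cons_cons a a' x'
      have h2 := bp'_cons_cons a a' (x' ++ y)
      simp only [List.cons_append] at *
      omega

/-- a prefix transposition removes at most three redefined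
breakpoints. -/
theorem prefixTransposition_removes_at_most_three_bp'
    (n : ℕ) (π : List ℕ) (hπ : IsPerm n π)
    (j k : ℕ) (hj : 2 ≤ j) (hjk : j < k) (hk : k ≤ n + 1) :
    bp' π - bp' (prefixTransposition π j k) ≤ 3 := by
  have hdec : π = π.take 1 ++ ((π.drop 1).take (j - 1) ++
      ((π.drop j).take (k - j) ++ π.drop k)) := by
    have e1 : π = π.take 1 ++ π.drop 1 := (List.take_append_drop 1 π).symm
    have e2 : π.drop 1 = (π.drop 1).take (j - 1) ++ (π.drop 1).drop (j - 1) :=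
      (List.take_append_drop _ _).symm
    have e3 : (π.drop 1).drop (j - 1) = π.drop j := by
      rw [List.drop_drop]; congr 1; omega
    have e4 : π.drop j = (π.drop j).take (k - j) ++ (π.drop j).drop (k - j) :=
      (List.take_append_drop _ _).symm
    have e5 : (π.drop j).drop (k - j) = π.drop k := by
      rw [List.drop_drop]; congr 1; omega
    conv_lhs => rw [e1, e2, e3, e4, e5]
  have hτ : prefixTransposition π j k = π.take 1 ++ ((π.drop j).take (k - j) ++
      ((π.drop 1).take (j - 1) ++ π.drop k)) := by
    unfold prefixTransposition
    simp [List.append_assoc]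
  have h1 : bp' π ≤ bp' (π.take 1) + bp' ((π.drop 1).take (j - 1))
      + bp' ((π.drop j).take (k - j)) + bp' (π.drop k) + 3 := by
    have e : bp' π = bp' (π.take 1 ++ ((π.drop 1).take (j - 1) ++
        ((π.drop j).take (k - j) ++ π.drop k))) := by rw [← hdec]
    rw [e]
    have := bp'_append_le (π.take 1) ((π.drop 1).take (j - 1) ++
      ((π.drop j).take (k - j) ++ π.drop k))
    have := bp'_append_le ((π.drop 1).take (j - 1))
      ((π.drop j).take (k - j) ++ π.drop k)
    have := bp'_append_le ((π.drop j).take (k - j)) (π.drop k)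
    omega
  have h2 : bp' (π.take 1) + bp' ((π.drop 1).take (j - 1))
      + bp' ((π.drop j).take (k - j)) + bp' (π.drop k)
      ≤ bp' (prefixTransposition π j k) := by
    rw [hτ]
    have := bp'_append_ge (π.take 1) ((π.drop j).take (k - j) ++
      ((π.drop 1).take (j - 1) ++ π.drop k))
    have := bp'_append_ge ((π.drop j).take (k - j))
      ((π.drop 1).take (j - 1) ++ π.drop k)
    have := bp'_append_ge ((π.drop 1).take (j - 1)) (π.drop k)
    omega
  omega
end
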